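/- arXiv:2101.12648 — 2 statements merged into one kernel-verified Lean document; each statement's English description precedes it below -/
import Mathlib

section
/- For positive reals $q_1,\dots,q_n$, $p_1,\dots,p_n$ and $r>0$ with $\sum_i p_i > r$, one has the integral identity $\int_0^\infty \cdots \int_0^\infty \prod_{i=1}^n dt_i\, e^{-\sum_i q_i t_i} \frac{\prod_i t_i^{p_i-1}}{(\sum_i t_i)^r} = \frac{\prod_i \Gamma(p_i)}{\Gamma(r)} \int_0^\infty dx\, \frac{x^{r-1}}{\prod_i (x+q_i)^{p_i}}$. -/
open MeasureTheory Real

private lemma aux_gamma_lintegral {a b : ℝ} (ha : 0 < a) (hb : 0 < b) :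
    ∫⁻ t in Set.Ioi (0:ℝ), ENNReal.ofReal (t ^ (a-1) * Real.exp (-(b*t))) =
      ENNReal.ofReal ((1/b) ^ a * Real.Gamma a) := by
  have hint : IntegrableOn (fun t : ℝ => t ^ (a-1) * Real.exp (-(b*t))) (Set.Ioi 0) := by
    have := integrableOn_rpow_mul_exp_neg_mul_rpow (p := 1) (s := a - 1) (b := b)
      (by linarith) (by norm_num) hb
    simpa [Real.rpow_one] using this
  rw [← ofReal_integral_eq_lintegral_ofReal hint ?_,
    Real.integral_rpow_mul_exp_neg_mul_Ioi ha hb]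
  filter_upwards [ae_restrict_mem measurableSet_Ioi] with t ht
  have : (0:ℝ) < t := ht
  positivity

private lemma aux_lintegral_fin_prod : ∀ {n : ℕ} (f : Fin n → ℝ → ENNReal),
    (∀ i, Measurable (f i)) →
    ∫⁻ t : Fin n → ℝ, ∏ i, f i (t i) = ∏ i, ∫⁻ s : ℝ, f i s := by
  intro n
  induction n with
  | zero => intro f hf; simp [volume_pi, lintegral_const]
  | succ n ih =>
    intro f hf
    have hmeas : Measurable fun t : Fin (n+1) → ℝ => ∏ i, f i (t i) :=
      Finset.measurable_prod _ fun i _ => (hf i).comp (measurable_pi_apply i)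
    have h := (measurePreserving_piFinSuccAbove
      (fun _ : Fin (n+1) => (volume : Measure ℝ)) 0).symm
    rw [volume_pi, ← h.lintegral_comp hmeas]
    simp only [MeasurableEquiv.piFinSuccAbove_symm_apply, Fin.prod_univ_succ,
      Fin.insertNthEquiv, Equiv.coe_fn_mk, Fin.insertNth_zero, Fin.zero_succAbove, cast_eq,
      Fin.cons_zero, Fin.cons_succ]
    rw [lintegral_prod_mul (f := fun s => f 0 s) (g := fun y : Fin n → ℝ => ∏ i, f i.succ (y i))
      (hf 0).aemeasurable
      ((Finset.measurable_prod _ fun i _ => (hf i.succ).comp (measurable_pi_apply i)).aemeasurable)]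
    rw [← volume_pi, ih (fun i => f i.succ) (fun i => hf i.succ)]

/-- Generalized Feynman–Schwinger parametrization identity:
for positive `qᵢ`, `pᵢ` and `r > 0` with `∑ pᵢ > r`,
`∫ₜ e^{-∑ qᵢ tᵢ} (∏ tᵢ^{pᵢ-1}) / (∑ tᵢ)^r = (∏ Γ(pᵢ)/Γ(r)) ∫ₓ x^{r-1}/∏(x+qᵢ)^{pᵢ}`. -/
theorem schwinger_parametrization (n : ℕ) (hn : 0 < n) (q p : Fin n → ℝ) (r : ℝ)
    (hq : ∀ i, 0 < q i) (hp : ∀ i, 0 < p i) (hr : 0 < r) (hsum : r < ∑ i, p i) :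
    (∫ t in {t : Fin n → ℝ | ∀ i, 0 < t i},
        Real.exp (-∑ i, q i * t i) * (∏ i, (t i) ^ (p i - 1)) / (∑ i, t i) ^ r)
      = ((∏ i, Real.Gamma (p i)) / Real.Gamma r) *
        ∫ x in Set.Ioi (0 : ℝ), x ^ (r - 1) / ∏ i, (x + q i) ^ (p i) := by
  haveI : Nonempty (Fin n) := Fin.pos_iff_nonempty.mp hn
  have hΓr : (0:ℝ) < Real.Gamma r := Real.Gamma_pos_of_pos hr
  set S : Set (Fin n → ℝ) := {t : Fin n → ℝ | ∀ i, 0 < t i} with hS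
  have hSm : MeasurableSet S := by
    have : S = Set.pi Set.univ (fun _ : Fin n => Set.Ioi (0:ℝ)) := by
      ext t; simp [hS, Set.mem_pi]
    rw [this]; exact MeasurableSet.univ_pi fun i => measurableSet_Ioi
  set F : (Fin n → ℝ) → ℝ := fun t =>
    Real.exp (-∑ i, q i * t i) * (∏ i, (t i) ^ (p i - 1)) / (∑ i, t i) ^ r with hF
  set c : ℝ := (∏ i, Real.Gamma (p i)) / Real.Gamma r with hc
  have hc0 : 0 ≤ c := by
    rw [hc]
    have : 0 ≤ ∏ i, Real.Gamma (p i) :=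
      Finset.prod_nonneg fun i _ => (Real.Gamma_pos_of_pos (hp i)).le
    positivity
  set φ : ℝ → ℝ := fun x => x ^ (r - 1) / ∏ i, (x + q i) ^ (p i) with hφ
  set G : (Fin n → ℝ) → ℝ → ℝ := fun t x =>
    (x ^ (r-1) * Real.exp (-((∑ i, t i) * x))) *
      ((Real.exp (-∑ i, q i * t i) * ∏ i, (t i) ^ (p i - 1)) / Real.Gamma r) with hG
  have hFm : Measurable F := by rw [hF]; fun_prop
  have hφm : Measurable φ := by rw [hφ]; fun_prop
  have hGm : Measurable (fun z : (Fin n → ℝ) × ℝ => G z.1 z.2) := by rw [hG]; fun_prop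
  have key : (∫⁻ t in S, ENNReal.ofReal (F t)) =
      ENNReal.ofReal c * ∫⁻ x in Set.Ioi (0:ℝ), ENNReal.ofReal (φ x) := by
    calc ∫⁻ t in S, ENNReal.ofReal (F t)
        = ∫⁻ t in S, ∫⁻ x in Set.Ioi (0:ℝ), ENNReal.ofReal (G t x) := by
          refine lintegral_congr_ae ?_
          filter_upwards [ae_restrict_mem hSm] with t ht
          have ht' : ∀ i, 0 < t i := ht
          have hs : 0 < ∑ i, t i := Finset.sum_pos (fun i _ => ht' i) Finset.univ_nonempty
          have hprod : 0 ≤ ∏ i, (t i) ^ (p i - 1) :=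
            Finset.prod_nonneg fun i _ => Real.rpow_nonneg (ht' i).le _
          have step1 : (∫⁻ x in Set.Ioi (0:ℝ), ENNReal.ofReal (G t x)) =
              ∫⁻ x in Set.Ioi (0:ℝ),
                ENNReal.ofReal (x ^ (r-1) * Real.exp (-((∑ i, t i) * x)))
                * ENNReal.ofReal
                  ((Real.exp (-∑ i, q i * t i) * ∏ i, (t i) ^ (p i - 1)) / Real.Gamma r) := by
            refine setLIntegral_congr_fun measurableSet_Ioi (fun x hx => ?_)
            have hx0 : (0:ℝ) < x := hx
            rw [hG, ← ENNReal.ofReal_mul (by positivity)]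
          rw [step1, lintegral_mul_const' _ _ ENNReal.ofReal_ne_top,
            aux_gamma_lintegral hr hs, ← ENNReal.ofReal_mul (by positivity)]
          congr 1
          have hsr : (0:ℝ) < (∑ i, t i) ^ r := Real.rpow_pos_of_pos hs r
          rw [hF, one_div, Real.inv_rpow hs.le]
          field_simp
      _ = ∫⁻ x in Set.Ioi (0:ℝ), ∫⁻ t in S, ENNReal.ofReal (G t x) := by
          exact lintegral_lintegral_swap (hGm.ennreal_ofReal).aemeasurable
      _ = ∫⁻ x in Set.Ioi (0:ℝ), ENNReal.ofReal (c * φ x) := by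
          refine lintegral_congr_ae ?_
          filter_upwards [ae_restrict_mem measurableSet_Ioi] with x hx
          have hx0 : (0:ℝ) < x := hx
          have hqx : ∀ i : Fin n, (0:ℝ) < q i + x := fun i => by have := hq i; linarith
          have hfac : ∀ t : Fin n → ℝ,
              (S.indicator (fun t => ENNReal.ofReal (G t x)) t) =
                ENNReal.ofReal (x ^ (r-1) / Real.Gamma r) *
                  ∏ i, (Set.Ioi (0:ℝ)).indicator
                    (fun s => ENNReal.ofReal (s ^ (p i - 1) * Real.exp (-((q i + x) * s))))
                    (t i) := by
            intro t
            by_cases htS : t ∈ S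
            · have ht' : ∀ i, 0 < t i := htS
              rw [Set.indicator_of_mem htS]
              have h1 : ∀ i : Fin n, (Set.Ioi (0:ℝ)).indicator
                  (fun s => ENNReal.ofReal (s ^ (p i - 1) * Real.exp (-((q i + x) * s)))) (t i)
                  = ENNReal.ofReal ((t i) ^ (p i - 1) * Real.exp (-((q i + x) * (t i)))) :=
                fun i => Set.indicator_of_mem (ht' i) _
              rw [Finset.prod_congr rfl fun i _ => h1 i,
                ← ENNReal.ofReal_prod_of_nonneg (fun i _ =>
                  mul_nonneg (Real.rpow_nonneg (ht' i).le _) (Real.exp_pos _).le),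
                ← ENNReal.ofReal_mul (by positivity)]
              congr 1
              rw [hG, Finset.prod_mul_distrib, ← Real.exp_sum]
              have hsum2 : (∑ i, -((q i + x) * t i)) =
                  (-∑ i, q i * t i) + (-((∑ i, t i) * x)) := by
                rw [Finset.sum_mul,
                  Finset.sum_congr rfl (fun i _ => show -((q i + x) * t i)
                    = -(q i * t i) + -(t i * x) by ring),
                  Finset.sum_add_distrib, Finset.sum_neg_distrib, Finset.sum_neg_distrib]
              rw [hsum2, Real.exp_add]
              ring
            · obtain ⟨i, hi⟩ := not_forall.mp htS
              have hz : (Set.Ioi (0:ℝ)).indicator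
                  (fun s => ENNReal.ofReal (s ^ (p i - 1) * Real.exp (-((q i + x) * s))))
                  (t i) = 0 := Set.indicator_of_notMem (by simpa using hi) _
              rw [Set.indicator_of_notMem htS]
              exact (mul_eq_zero_of_right _
                (Finset.prod_eq_zero (Finset.mem_univ i) hz)).symm
          have hmeas_ind : ∀ i : Fin n, Measurable fun s : ℝ => (Set.Ioi (0:ℝ)).indicator
              (fun s => ENNReal.ofReal (s ^ (p i - 1) * Real.exp (-((q i + x) * s)))) s :=
            fun i => Measurable.indicator (by fun_prop) measurableSet_Ioi
          rw [← lintegral_indicator hSm, lintegral_congr hfac,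
            lintegral_const_mul' _ _ ENNReal.ofReal_ne_top,
            aux_lintegral_fin_prod _ hmeas_ind]
          have h2 : ∀ i : Fin n, (∫⁻ s : ℝ, (Set.Ioi (0:ℝ)).indicator
                (fun s => ENNReal.ofReal (s ^ (p i - 1) * Real.exp (-((q i + x) * s)))) s)
              = ENNReal.ofReal ((1/(q i + x)) ^ (p i) * Real.Gamma (p i)) := fun i => by
            rw [lintegral_indicator measurableSet_Ioi]
            exact aux_gamma_lintegral (hp i) (hqx i)
          rw [Finset.prod_congr rfl fun i _ => h2 i,
            ← ENNReal.ofReal_prod_of_nonneg (fun i _ => mul_nonneg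
              (Real.rpow_nonneg (one_div_nonneg.mpr (hqx i).le) _)
              (Real.Gamma_pos_of_pos (hp i)).le),
            ← ENNReal.ofReal_mul (by positivity)]
          congr 1
          rw [hc, hφ, Finset.prod_mul_distrib,
            Finset.prod_congr rfl (fun i _ => show ((1:ℝ)/(q i + x)) ^ (p i)
              = ((x + q i) ^ (p i))⁻¹ by
                rw [show q i + x = x + q i from add_comm _ _, one_div,
                  Real.inv_rpow (by have := hq i; linarith : (0:ℝ) ≤ x + q i)]),
            Finset.prod_inv_distrib]
          have h4 : (0:ℝ) < ∏ i, (x + q i) ^ (p i) :=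
            Finset.prod_pos fun i _ => Real.rpow_pos_of_pos (by have := hq i; linarith) _
          field_simp
      _ = ENNReal.ofReal c * ∫⁻ x in Set.Ioi (0:ℝ), ENNReal.ofReal (φ x) := by
          simp_rw [ENNReal.ofReal_mul hc0]
          exact lintegral_const_mul' _ _ ENNReal.ofReal_ne_top
  have hL : (∫ t in S, F t) = (∫⁻ t in S, ENNReal.ofReal (F t)).toReal := by
    apply integral_eq_lintegral_of_nonneg_ae
    · filter_upwards [ae_restrict_mem hSm] with t ht
      have ht' : ∀ i, 0 < t i := ht
      have h1 : 0 < ∑ i, t i := Finset.sum_pos (fun i _ => ht' i) Finset.univ_nonempty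
      have h2 : 0 ≤ ∏ i, (t i) ^ (p i - 1) :=
        Finset.prod_nonneg fun i _ => Real.rpow_nonneg (ht' i).le _
      rw [hF]
      exact div_nonneg (mul_nonneg (Real.exp_pos _).le h2) (Real.rpow_nonneg h1.le _)
    · exact hFm.aestronglyMeasurable
  have hR : (∫ x in Set.Ioi (0:ℝ), φ x)
      = (∫⁻ x in Set.Ioi (0:ℝ), ENNReal.ofReal (φ x)).toReal := by
    apply integral_eq_lintegral_of_nonneg_ae
    · filter_upwards [ae_restrict_mem measurableSet_Ioi] with x hx
      have hx0 : (0:ℝ) < x := hx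
      have h2 : 0 ≤ ∏ i, (x + q i) ^ (p i) := Finset.prod_nonneg fun i _ =>
        Real.rpow_nonneg (by have := hq i; linarith) _
      rw [hφ]
      exact div_nonneg (Real.rpow_nonneg hx0.le _) h2
    · exact hφm.aestronglyMeasurable
  rw [hL, hR, key, ENNReal.toReal_mul, ENNReal.toReal_ofReal hc0]
end

section
/- After applying the Schwinger parametrization identity, $\alpha_1 = \frac{1}{2(4\pi)^4} \cdot \frac{\Gamma(7/2)^2 \Gamma(3/2)^2}{\Gamma(4)} \int_0^\infty \prod_{i=1}^4 ds_i\, s_i \int_0^\infty dx\, \frac{x^3}{\prod_{i=1,2}(\frac{1}{4}s_i^2 + s_i + x)^{7/2} \prod_{i=3,4}(\frac{1}{4}s_i^2 + s_i + x)^{3/2}}$ equals $\frac{61}{645120\,\pi^2}$, where the exponents $7/2$ apply to $i=1,3$ and $3/2$ to $i=2,4$ (equivalently, by symmetry, to any pairing of two indices with $7/2$ and two with $3/2$). -/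
open MeasureTheory Real Set Filter

section AlphaOneAux

/-! ### One–dimensional Schwinger integrals -/

private lemma alpha1_hasDerivAt_Q (x s : ℝ) :
    HasDerivAt (fun s : ℝ => (1/4)*s^2 + s + x) (s/2 + 1) s := by
  have h : HasDerivAt (fun s : ℝ => (1/4)*s^2 + s + x) (1/4*(↑2 * s^(2-1)) + 1) s :=
    (((hasDerivAt_pow 2 s).const_mul (1/4:ℝ)).add (hasDerivAt_id s)).add_const x
  convert h using 1; push_cast; ring

private lemma alpha1_Qpos {x s : ℝ} (hx : 0 < x) (hs : 0 ≤ s) :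
    0 < (1/4)*s^2 + s + x := by nlinarith

private lemma alpha1_Qtop (x : ℝ) :
    Tendsto (fun s : ℝ => (1/4)*s^2 + s + x) atTop atTop := by
  apply tendsto_atTop_mono' atTop _ (tendsto_atTop_add_const_right _ x tendsto_id)
  filter_upwards [eventually_ge_atTop (0:ℝ)] with s hs
  simp only [id]; nlinarith

private lemma alpha1_Qrpow_tendsto (x : ℝ) {r : ℝ} (hr : 0 < r) :
    Tendsto (fun s : ℝ => ((1/4)*s^2 + s + x) ^ (-r : ℝ)) atTop (nhds 0) :=
  (tendsto_rpow_neg_atTop hr).comp (alpha1_Qtop x)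

private lemma alpha1_t2top : Tendsto (fun s : ℝ => (s/2+1)^2) atTop atTop := by
  apply Tendsto.comp (tendsto_pow_atTop (two_ne_zero))
  apply tendsto_atTop_add_const_right
  exact tendsto_id.atTop_div_const (by norm_num)

private lemma alpha1_tQ_tendsto (x : ℝ) :
    Tendsto (fun s : ℝ => (s/2+1) * ((1/4)*s^2 + s + x) ^ (-(1/2) : ℝ)) atTop (nhds 1) := by
  have h1 : Tendsto (fun s : ℝ => ((1/4)*s^2 + s + x) / (s/2+1)^2) atTop (nhds 1) := by
    have h2 : Tendsto (fun s : ℝ => 1 + (x-1) * ((s/2+1)^2)⁻¹) atTop (nhds (1 + (x-1)*0)) :=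
      (((alpha1_t2top).inv_tendsto_atTop).const_mul (x-1)).const_add 1
    rw [show (1:ℝ) = 1 + (x-1)*0 by ring]
    apply h2.congr'
    filter_upwards [eventually_gt_atTop (0:ℝ)] with s hs
    have ht : (s/2+1) ≠ 0 := by positivity
    have ht2 : (s/2+1)^2 ≠ 0 := pow_ne_zero 2 ht
    simp only [mul_zero, add_zero]
    rw [eq_div_iff ht2]
    simp only [add_mul, mul_assoc, inv_mul_cancel₀ ht2]
    ring
  have h3 : Tendsto (fun s : ℝ => (((1/4)*s^2 + s + x) / (s/2+1)^2) ^ (-(1/2):ℝ)) atTop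
      (nhds 1) := by
    have := (Real.continuousAt_rpow_const 1 (-(1/2)) (Or.inl one_ne_zero)).tendsto.comp h1
    simpa [Function.comp_def] using this
  apply h3.congr'
  filter_upwards [eventually_gt_atTop (max 0 (-4*x))] with s hs
  have hs0 : 0 < s := lt_of_le_of_lt (le_max_left _ _) hs
  have ht : (0:ℝ) < s/2+1 := by linarith
  have hQ : (0:ℝ) < (1/4)*s^2 + s + x := by
    rcases le_or_gt 0 x with h | h
    · nlinarith
    · have : -4*x < s := lt_of_le_of_lt (le_max_right _ _) hs
      nlinarith
  rw [Real.div_rpow hQ.le (by positivity), ← Real.rpow_natCast (s/2+1) 2, ← Real.rpow_mul ht.le]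
  norm_num
  rw [Real.rpow_neg_one]
  field_simp

private noncomputable def alpha1G3 (x s : ℝ) : ℝ :=
  -4 * ((1/4)*s^2 + s + x) ^ (-(1/2):ℝ)
    - (4/(x-1)) * ((s/2+1) * ((1/4)*s^2 + s + x) ^ (-(1/2):ℝ))

private lemma alpha1G3_deriv {x : ℝ} (hx : 0 < x) (hx1 : x ≠ 1) {s : ℝ} (hs : 0 ≤ s) :
    HasDerivAt (alpha1G3 x) (s * ((1/4)*s^2 + s + x) ^ (-(3/2):ℝ)) s := by
  have hQ := alpha1_Qpos hx hs
  have hA : HasDerivAt (fun s : ℝ => ((1/4)*s^2 + s + x) ^ (-(1/2):ℝ))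
      ((s/2+1) * (-(1/2)) * ((1/4)*s^2 + s + x) ^ (-(1/2)-1:ℝ)) s :=
    (alpha1_hasDerivAt_Q x s).rpow_const (Or.inl hQ.ne')
  have ht : HasDerivAt (fun s : ℝ => s/2+1) (1/2) s := by
    simpa using ((hasDerivAt_id s).div_const 2).add_const 1
  have h := (hA.const_mul (-4:ℝ)).sub ((ht.mul hA).const_mul (4/(x-1)))
  convert h using 1
  · rfl
  · rfl
  · rfl
  have e1 : ((1/4)*s^2 + s + x) ^ (-(1/2)-1:ℝ) = ((1/4)*s^2 + s + x) ^ (-(3/2):ℝ) := by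
    norm_num
  have e2 : ((1/4)*s^2 + s + x) ^ (-(1/2):ℝ)
      = ((1/4)*s^2 + s + x) * ((1/4)*s^2 + s + x) ^ (-(3/2):ℝ) := by
    rw [← Real.rpow_one_add' hQ.le (by norm_num)]
    norm_num
  rw [e1, e2]
  have hc : x - 1 ≠ 0 := sub_ne_zero.mpr hx1
  field_simp
  ring

private lemma alpha1G3_tendsto {x : ℝ} : Tendsto (alpha1G3 x) atTop (nhds (-(4/(x-1)))) := by
  have h := ((alpha1_Qrpow_tendsto x (by norm_num : (0:ℝ) < 1/2)).const_mul (-4:ℝ)).sub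
    ((alpha1_tQ_tendsto x).const_mul (4/(x-1)))
  unfold alpha1G3
  convert h using 2
  norm_num

private lemma alpha1_int3 {x : ℝ} (hx : 0 < x) (hx1 : x ≠ 1) :
    IntegrableOn (fun s : ℝ => s * ((1/4)*s^2 + s + x) ^ (-(3/2):ℝ)) (Ioi 0) ∧
    ∫ s in Ioi (0:ℝ), s * ((1/4)*s^2 + s + x) ^ (-(3/2):ℝ) = 4 / (√x + 1) := by
  have hderiv : ∀ s ∈ Ici (0:ℝ), HasDerivAt (alpha1G3 x)
      (s * ((1/4)*s^2 + s + x) ^ (-(3/2):ℝ)) s := fun s hs => alpha1G3_deriv hx hx1 hs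
  have hpos : ∀ s ∈ Ioi (0:ℝ), 0 ≤ s * ((1/4)*s^2 + s + x) ^ (-(3/2):ℝ) := fun s hs => by
    have : (0:ℝ) ≤ s := le_of_lt hs
    positivity
  refine ⟨integrableOn_Ioi_deriv_of_nonneg' hderiv hpos alpha1G3_tendsto, ?_⟩
  rw [integral_Ioi_of_hasDerivAt_of_nonneg' hderiv hpos alpha1G3_tendsto]
  obtain ⟨y, hy0, rfl⟩ : ∃ y : ℝ, 0 < y ∧ y^2 = x := ⟨√x, Real.sqrt_pos.mpr hx, Real.sq_sqrt hx.le⟩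
  have hys : √(y^2) = y := Real.sqrt_sq hy0.le
  have hyr : ((1/4)*(0:ℝ)^2 + 0 + y^2) ^ (-(1/2):ℝ) = y⁻¹ := by
    norm_num
    rw [← Real.rpow_natCast y 2, ← Real.rpow_mul hy0.le]
    norm_num [Real.rpow_neg_one]
  have hy1 : y ≠ 1 := by rintro rfl; simp at hx1
  have hc : y^2 - 1 ≠ 0 := by
    intro h
    apply hy1
    nlinarith
  have h1 : y + 1 ≠ 0 := by positivity
  simp only [alpha1G3, hyr, hys]
  field_simp
  ring

private noncomputable def alpha1G7 (x s : ℝ) : ℝ :=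
  -(4/5) * ((1/4)*s^2 + s + x) ^ (-(5/2):ℝ)
    - (4/(5*(x-1))) * ((s/2+1) * ((1/4)*s^2 + s + x) ^ (-(5/2):ℝ))
    - (16/(15*(x-1)^2)) * ((s/2+1) * ((1/4)*s^2 + s + x) ^ (-(3/2):ℝ))
    - (32/(15*(x-1)^3)) * ((s/2+1) * ((1/4)*s^2 + s + x) ^ (-(1/2):ℝ))

private lemma alpha1G7_deriv {x : ℝ} (hx : 0 < x) (hx1 : x ≠ 1) {s : ℝ} (hs : 0 ≤ s) :
    HasDerivAt (alpha1G7 x) (s * ((1/4)*s^2 + s + x) ^ (-(7/2):ℝ)) s := by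
  have hQ := alpha1_Qpos hx hs
  set Q : ℝ := (1/4)*s^2 + s + x with hQdef
  have hA5 : HasDerivAt (fun s : ℝ => ((1/4)*s^2 + s + x) ^ (-(5/2):ℝ))
      ((s/2+1) * (-(5/2)) * ((1/4)*s^2 + s + x) ^ (-(5/2)-1:ℝ)) s :=
    (alpha1_hasDerivAt_Q x s).rpow_const (Or.inl hQ.ne')
  have hA3 : HasDerivAt (fun s : ℝ => ((1/4)*s^2 + s + x) ^ (-(3/2):ℝ))
      ((s/2+1) * (-(3/2)) * ((1/4)*s^2 + s + x) ^ (-(3/2)-1:ℝ)) s :=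
    (alpha1_hasDerivAt_Q x s).rpow_const (Or.inl hQ.ne')
  have hA1 : HasDerivAt (fun s : ℝ => ((1/4)*s^2 + s + x) ^ (-(1/2):ℝ))
      ((s/2+1) * (-(1/2)) * ((1/4)*s^2 + s + x) ^ (-(1/2)-1:ℝ)) s :=
    (alpha1_hasDerivAt_Q x s).rpow_const (Or.inl hQ.ne')
  have ht : HasDerivAt (fun s : ℝ => s/2+1) (1/2) s := by
    simpa using ((hasDerivAt_id s).div_const 2).add_const 1
  have h := (((hA5.const_mul (-(4/5):ℝ)).sub ((ht.mul hA5).const_mul (4/(5*(x-1))))).sub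
    ((ht.mul hA3).const_mul (16/(15*(x-1)^2)))).sub
    ((ht.mul hA1).const_mul (32/(15*(x-1)^3)))
  convert h using 1
  · rfl
  · rfl
  · rfl
  have e0 : Q ^ (-(5/2)-1:ℝ) = Q ^ (-(7/2):ℝ) := by norm_num
  have e1 : Q ^ (-(5/2):ℝ) = Q * Q ^ (-(7/2):ℝ) := by
    rw [← Real.rpow_one_add' hQ.le (by norm_num)]; norm_num
  have e2 : Q ^ (-(3/2)-1:ℝ) = Q * Q ^ (-(7/2):ℝ) := by
    rw [← Real.rpow_one_add' hQ.le (by norm_num)]; norm_num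
  have e3 : Q ^ (-(3/2):ℝ) = Q^2 * Q ^ (-(7/2):ℝ) := by
    rw [show (-(3/2):ℝ) = ((2:ℕ):ℝ) + -(7/2) by norm_num, Real.rpow_add hQ,
      Real.rpow_natCast]
  have e4 : Q ^ (-(1/2)-1:ℝ) = Q^2 * Q ^ (-(7/2):ℝ) := by
    rw [show (-(1/2)-1:ℝ) = ((2:ℕ):ℝ) + -(7/2) by norm_num, Real.rpow_add hQ,
      Real.rpow_natCast]
  have e5 : Q ^ (-(1/2):ℝ) = Q^3 * Q ^ (-(7/2):ℝ) := by
    rw [show (-(1/2):ℝ) = ((3:ℕ):ℝ) + -(7/2) by norm_num, Real.rpow_add hQ,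
      Real.rpow_natCast]
  rw [e0, e1, e2, e3, e4, e5]
  have hc : x - 1 ≠ 0 := sub_ne_zero.mpr hx1
  simp only [hQdef]
  field_simp
  ring

private lemma alpha1G7_tendsto {x : ℝ} (hx : 0 < x) :
    Tendsto (alpha1G7 x) atTop (nhds (-(32/(15*(x-1)^3)))) := by
  have h5 : Tendsto (fun s : ℝ => (s/2+1) * ((1/4)*s^2 + s + x) ^ (-(5/2):ℝ)) atTop (nhds 0) := by
    have h := (alpha1_tQ_tendsto x).mul (alpha1_Qrpow_tendsto x (by norm_num : (0:ℝ) < 2))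
    rw [mul_zero] at h
    apply h.congr'
    filter_upwards [eventually_ge_atTop (0:ℝ)] with s hs
    have hQ := alpha1_Qpos hx hs
    rw [show (-(5/2):ℝ) = -(1/2) + -2 by norm_num, Real.rpow_add hQ]
    ring
  have h3 : Tendsto (fun s : ℝ => (s/2+1) * ((1/4)*s^2 + s + x) ^ (-(3/2):ℝ)) atTop (nhds 0) := by
    have h := (alpha1_tQ_tendsto x).mul (alpha1_Qrpow_tendsto x (by norm_num : (0:ℝ) < 1))
    rw [mul_zero] at h
    apply h.congr'
    filter_upwards [eventually_ge_atTop (0:ℝ)] with s hs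
    have hQ := alpha1_Qpos hx hs
    rw [show (-(3/2):ℝ) = -(1/2) + -1 by norm_num, Real.rpow_add hQ]
    ring
  have h := ((((alpha1_Qrpow_tendsto x (by norm_num : (0:ℝ) < 5/2)).const_mul (-(4/5):ℝ)).sub
    (h5.const_mul (4/(5*(x-1))))).sub (h3.const_mul (16/(15*(x-1)^2)))).sub
    ((alpha1_tQ_tendsto x).const_mul (32/(15*(x-1)^3)))
  unfold alpha1G7
  convert h using 2
  norm_num

private lemma alpha1_int7 {x : ℝ} (hx : 0 < x) (hx1 : x ≠ 1) :
    IntegrableOn (fun s : ℝ => s * ((1/4)*s^2 + s + x) ^ (-(7/2):ℝ)) (Ioi 0) ∧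
    ∫ s in Ioi (0:ℝ), s * ((1/4)*s^2 + s + x) ^ (-(7/2):ℝ)
      = 4*(3*√x+1)/(15 * √x^3 * (√x+1)^3) := by
  have hderiv : ∀ s ∈ Ici (0:ℝ), HasDerivAt (alpha1G7 x)
      (s * ((1/4)*s^2 + s + x) ^ (-(7/2):ℝ)) s := fun s hs => alpha1G7_deriv hx hx1 hs
  have hpos : ∀ s ∈ Ioi (0:ℝ), 0 ≤ s * ((1/4)*s^2 + s + x) ^ (-(7/2):ℝ) := fun s hs => by
    have : (0:ℝ) ≤ s := le_of_lt hs
    positivity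
  refine ⟨integrableOn_Ioi_deriv_of_nonneg' hderiv hpos (alpha1G7_tendsto hx), ?_⟩
  rw [integral_Ioi_of_hasDerivAt_of_nonneg' hderiv hpos (alpha1G7_tendsto hx)]
  obtain ⟨y, hy0, rfl⟩ : ∃ y : ℝ, 0 < y ∧ y^2 = x := ⟨√x, Real.sqrt_pos.mpr hx, Real.sq_sqrt hx.le⟩
  have hys : √(y^2) = y := Real.sqrt_sq hy0.le
  have key : ∀ k : ℕ, ∀ r : ℝ, ((2:ℕ):ℝ) * r = -((k:ℕ):ℝ) →
      ((1/4)*(0:ℝ)^2 + 0 + y^2) ^ r = (y^k)⁻¹ := by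
    intro k r hr
    rw [show ((1/4)*(0:ℝ)^2 + 0 + y^2) = y^2 by norm_num, ← Real.rpow_natCast y 2,
      ← Real.rpow_mul hy0.le, hr, Real.rpow_neg hy0.le, Real.rpow_natCast]
  have k5 := key 5 (-(5/2)) (by push_cast; ring)
  have k3 := key 3 (-(3/2)) (by push_cast; ring)
  have k1 := key 1 (-(1/2)) (by push_cast; ring)
  rw [pow_one] at k1
  have hy1 : y ≠ 1 := by rintro rfl; simp at hx1
  have hc : y^2 - 1 ≠ 0 := by intro h; apply hy1; nlinarith
  have h1 : y + 1 ≠ 0 := by positivity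
  simp only [alpha1G7, k5, k3, k1, hys]
  field_simp
  ring

private noncomputable def alpha1D (s : Fin 4 → ℝ) (x : ℝ) : ℝ :=
  ((1/4)*(s 0)^2 + s 0 + x) ^ ((7:ℝ)/2) * ((1/4)*(s 2)^2 + s 2 + x) ^ ((7:ℝ)/2) *
  ((1/4)*(s 1)^2 + s 1 + x) ^ ((3:ℝ)/2) * ((1/4)*(s 3)^2 + s 3 + x) ^ ((3:ℝ)/2)

private lemma alpha1D_pos {s : Fin 4 → ℝ} (hs : ∀ i, 0 < s i) {x : ℝ} (hx : 0 < x) :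
    0 < alpha1D s x := by
  have hq : ∀ i : Fin 4, 0 < (1/4)*(s i)^2 + s i + x := fun i => by have := hs i; nlinarith
  exact mul_pos (mul_pos (mul_pos (Real.rpow_pos_of_pos (hq 0) _)
    (Real.rpow_pos_of_pos (hq 2) _)) (Real.rpow_pos_of_pos (hq 1) _))
    (Real.rpow_pos_of_pos (hq 3) _)

private lemma alpha1D_meas_x (s : Fin 4 → ℝ) :
    Measurable (fun x : ℝ => x^3 / alpha1D s x) := by
  have hq : ∀ i : Fin 4, Measurable (fun x : ℝ => (1/4)*(s i)^2 + s i + x) := fun i =>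
    measurable_const.add measurable_id
  exact (measurable_id.pow_const 3).div
    (((((hq 0).pow_const _).mul ((hq 2).pow_const _)).mul ((hq 1).pow_const _)).mul
      ((hq 3).pow_const _))

private lemma alpha1_inner_integrable {s : Fin 4 → ℝ} (hs : ∀ i, 0 < s i) :
    IntegrableOn (fun x : ℝ => x^3 / alpha1D s x) (Ioi 0) := by
  set b : Fin 4 → ℝ := fun i => (1/4)*(s i)^2 + s i with hb
  have hbpos : ∀ i, 0 < b i := fun i => by have := hs i; simp only [hb]; nlinarith
  set m : ℝ := min (min (b 0) (b 1)) (min (b 2) (b 3)) with hm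
  have hmpos : 0 < m := lt_min (lt_min (hbpos 0) (hbpos 1)) (lt_min (hbpos 2) (hbpos 3))
  have hmle : ∀ i, m ≤ b i := by
    intro i
    fin_cases i
    · exact (min_le_left _ _).trans (min_le_left _ _)
    · exact (min_le_left _ _).trans (min_le_right _ _)
    · exact (min_le_right _ _).trans (min_le_left _ _)
    · exact (min_le_right _ _).trans (min_le_right _ _)
  have hmaj : IntegrableOn (fun x : ℝ => (m+x) ^ (-(7:ℝ))) (Ioi 0) := by
    have hderiv : ∀ x ∈ Ici (0:ℝ), HasDerivAt (fun x : ℝ => -(1/6) * (m+x)^(-(6:ℝ)))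
        ((m+x) ^ (-(7:ℝ))) x := by
      intro x hx
      have hx0 : (0:ℝ) ≤ x := hx
      have hmx : (0:ℝ) < m + x := by linarith
      have h : HasDerivAt (fun x : ℝ => (m+x)^(-(6:ℝ)))
          (1 * (-(6:ℝ)) * (m+x)^(-(6:ℝ)-1)) x :=
        ((hasDerivAt_id x).const_add m).rpow_const (Or.inl hmx.ne')
      have h2 := h.const_mul (-(1/6):ℝ)
      convert h2 using 1
      · rfl
      · rfl
      rw [show (-(6:ℝ)-1) = -(7:ℝ) by norm_num]
      ring
    have hpos' : ∀ x ∈ Ioi (0:ℝ), 0 ≤ (m+x) ^ (-(7:ℝ)) := fun x hx => by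
      have hx0 : (0:ℝ) < x := hx
      have : (0:ℝ) < m + x := by linarith
      positivity
    have htends : Tendsto (fun x : ℝ => -(1/6) * (m+x)^(-(6:ℝ))) atTop (nhds (-(1/6) * 0)) := by
      apply Tendsto.const_mul
      exact (tendsto_rpow_neg_atTop (by norm_num)).comp
        (tendsto_atTop_add_const_left _ m tendsto_id)
    exact integrableOn_Ioi_deriv_of_nonneg' hderiv hpos' htends
  apply Integrable.mono hmaj ((alpha1D_meas_x s).aestronglyMeasurable.restrict)
  rw [ae_restrict_iff' measurableSet_Ioi]
  apply ae_of_all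
  intro x hx
  have hx0 : (0:ℝ) < x := hx
  have hA : (0:ℝ) < m + x := by linarith
  have hq : ∀ i : Fin 4, 0 < b i + x := fun i => by have := hbpos i; linarith
  have hqm : ∀ i : Fin 4, m + x ≤ (1/4)*(s i)^2 + s i + x := fun i => by
    have := hmle i; simp only [hb] at this; linarith
  have hD : 0 < alpha1D s x := alpha1D_pos hs hx0
  have h7 : ∀ i : Fin 4, (m+x) ^ ((7:ℝ)/2) ≤ ((1/4)*(s i)^2 + s i + x) ^ ((7:ℝ)/2) :=
    fun i => Real.rpow_le_rpow hA.le (hqm i) (by norm_num)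
  have h3 : ∀ i : Fin 4, (m+x) ^ ((3:ℝ)/2) ≤ ((1/4)*(s i)^2 + s i + x) ^ ((3:ℝ)/2) :=
    fun i => Real.rpow_le_rpow hA.le (hqm i) (by norm_num)
  have hq' : ∀ i : Fin 4, (0:ℝ) < (1/4)*(s i)^2 + s i + x := fun i => by
    have := hs i; nlinarith
  have hDge : (m+x) ^ ((10:ℝ)) ≤ alpha1D s x := by
    have e : (m+x) ^ ((10:ℝ))
        = (m+x)^((7:ℝ)/2) * (m+x)^((7:ℝ)/2) * (m+x)^((3:ℝ)/2) * (m+x)^((3:ℝ)/2) := by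
      rw [← Real.rpow_add hA, ← Real.rpow_add hA, ← Real.rpow_add hA]
      norm_num
    rw [e]
    unfold alpha1D
    have n1 : (0:ℝ) ≤ (m+x)^((7:ℝ)/2) := (Real.rpow_pos_of_pos hA _).le
    have n2 : (0:ℝ) ≤ (m+x)^((3:ℝ)/2) := (Real.rpow_pos_of_pos hA _).le
    have le1 := mul_le_mul (h7 0) (h7 2) n1 (Real.rpow_pos_of_pos (hq' 0) _).le
    have le2 := mul_le_mul le1 (h3 1) n2
      (mul_nonneg (Real.rpow_pos_of_pos (hq' 0) _).le (Real.rpow_pos_of_pos (hq' 2) _).le)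
    exact mul_le_mul le2 (h3 3) n2
      (mul_nonneg (mul_nonneg (Real.rpow_pos_of_pos (hq' 0) _).le
        (Real.rpow_pos_of_pos (hq' 2) _).le) (Real.rpow_pos_of_pos (hq' 1) _).le)
  have hf0 : 0 ≤ x^3 / alpha1D s x := by positivity
  have hg0 : 0 ≤ (m+x) ^ (-(7:ℝ)) := (Real.rpow_pos_of_pos hA _).le
  rw [Real.norm_eq_abs, Real.norm_eq_abs, abs_of_nonneg hf0, abs_of_nonneg hg0]
  calc x^3 / alpha1D s x ≤ x^3 / (m+x)^((10:ℝ)) :=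
        div_le_div_of_nonneg_left (by positivity) (Real.rpow_pos_of_pos hA _) hDge
    _ ≤ (m+x)^((3:ℝ)) / (m+x)^((10:ℝ)) := by
        apply (div_le_div_iff_of_pos_right (Real.rpow_pos_of_pos hA _)).mpr
        rw [show ((3:ℝ)) = ((3:ℕ):ℝ) by norm_num, Real.rpow_natCast]
        exact pow_le_pow_left₀ hx0.le (by linarith) 3
    _ = (m+x) ^ (-(7:ℝ)) := by
        rw [← Real.rpow_sub hA]
        norm_num

private noncomputable def alpha1H (y : ℝ) : ℝ :=
  -(9/4) * ((y+1)^4)⁻¹ + (21/5) * ((y+1)^5)⁻¹ - (8/3) * ((y+1)^6)⁻¹ + (4/7) * ((y+1)^7)⁻¹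

private lemma alpha1H_deriv {y : ℝ} (hy : 0 ≤ y) :
    HasDerivAt alpha1H (y*(3*y+1)^2/(y+1)^8) y := by
  have hy1 : y + 1 ≠ 0 := by positivity
  have hb : HasDerivAt (fun y : ℝ => y + 1) 1 y := (hasDerivAt_id y).add_const 1
  have hp : ∀ n : ℕ, HasDerivAt (fun y : ℝ => ((y+1)^n)⁻¹)
      (-(↑n * (y+1)^(n-1) * 1) / ((y+1)^n)^2) y := fun n => (hb.pow n).inv (pow_ne_zero n hy1)
  have h := ((((hp 4).const_mul (-(9/4):ℝ)).add ((hp 5).const_mul (21/5))).sub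
    ((hp 6).const_mul (8/3))).add ((hp 7).const_mul (4/7))
  convert h using 1
  · rfl
  · rfl
  · rfl
  field_simp
  ring

private lemma alpha1H_tendsto : Tendsto alpha1H atTop (nhds 0) := by
  have hb : Tendsto (fun y : ℝ => y + 1) atTop atTop := tendsto_atTop_add_const_right _ 1 tendsto_id
  have hp : ∀ n : ℕ, n ≠ 0 → Tendsto (fun y : ℝ => ((y+1)^n)⁻¹) atTop (nhds 0) := fun n hn =>
    ((tendsto_pow_atTop hn).comp hb).inv_tendsto_atTop
  have h := ((((hp 4 (by norm_num)).const_mul (-(9/4):ℝ)).add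
    ((hp 5 (by norm_num)).const_mul (21/5))).sub
    ((hp 6 (by norm_num)).const_mul (8/3))).add ((hp 7 (by norm_num)).const_mul (4/7))
  unfold alpha1H
  convert h using 2
  norm_num

private lemma alpha1_ratint :
    IntegrableOn (fun y : ℝ => y*(3*y+1)^2/(y+1)^8) (Ioi 0) ∧
    ∫ y in Ioi (0:ℝ), y*(3*y+1)^2/(y+1)^8 = 61/420 := by
  have hderiv : ∀ y ∈ Ici (0:ℝ), HasDerivAt alpha1H (y*(3*y+1)^2/(y+1)^8) y :=
    fun y hy => alpha1H_deriv hy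
  have hpos : ∀ y ∈ Ioi (0:ℝ), 0 ≤ y*(3*y+1)^2/(y+1)^8 := fun y hy => by
    have : (0:ℝ) ≤ y := le_of_lt hy
    positivity
  refine ⟨integrableOn_Ioi_deriv_of_nonneg' hderiv hpos alpha1H_tendsto, ?_⟩
  rw [integral_Ioi_of_hasDerivAt_of_nonneg' hderiv hpos alpha1H_tendsto]
  unfold alpha1H
  norm_num

private noncomputable def alpha1W (x : ℝ) : ℝ :=
  x^3 * (4*(3*√x+1)/(15 * √x^3 * (√x+1)^3))^2 * (4/(√x+1))^2

private lemma alpha1W_subst : ∀ y ∈ Ioi (0:ℝ),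
    (|(2:ℝ)| * y ^ ((2:ℝ) - 1)) • alpha1W (y ^ (2:ℝ))
      = (512/225) * (y*(3*y+1)^2/(y+1)^8) := by
  intro y hy
  have hy0 : (0:ℝ) < y := hy
  have h2 : y ^ (2:ℝ) = y^2 := by
    rw [show (2:ℝ) = ((2:ℕ):ℝ) by norm_num, Real.rpow_natCast]
  have h1 : y ^ ((2:ℝ)-1) = y := by norm_num
  have hys : √(y^2) = y := Real.sqrt_sq hy0.le
  rw [h2, h1]
  simp only [alpha1W, hys, smul_eq_mul]
  have hy1 : y + 1 ≠ 0 := by positivity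
  have hyne : y ≠ 0 := hy0.ne'
  field_simp
  ring

private lemma alpha1W_int :
    IntegrableOn alpha1W (Ioi 0) ∧ ∫ x in Ioi (0:ℝ), alpha1W x = 7808/23625 := by
  have hR : IntegrableOn (fun y : ℝ => (512/225) * (y*(3*y+1)^2/(y+1)^8)) (Ioi 0) :=
    alpha1_ratint.1.const_mul _
  constructor
  · refine (integrableOn_Ioi_comp_rpow_iff alpha1W two_ne_zero).mp ?_
    exact (integrableOn_congr_fun alpha1W_subst measurableSet_Ioi).mpr hR
  · rw [← integral_comp_rpow_Ioi alpha1W two_ne_zero,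
      setIntegral_congr_fun measurableSet_Ioi alpha1W_subst,
      MeasureTheory.integral_const_mul, alpha1_ratint.2]
    norm_num

/-- the four 1-d factor functions -/
private noncomputable def alpha1Psi (x : ℝ) : Fin 4 → ℝ → ℝ :=
  ![(Ioi (0:ℝ)).indicator (fun u => u * ((1/4)*u^2 + u + x) ^ (-(7/2):ℝ)),
    (Ioi (0:ℝ)).indicator (fun u => u * ((1/4)*u^2 + u + x) ^ (-(3/2):ℝ)),
    (Ioi (0:ℝ)).indicator (fun u => u * ((1/4)*u^2 + u + x) ^ (-(7/2):ℝ)),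
    (Ioi (0:ℝ)).indicator (fun u => u * ((1/4)*u^2 + u + x) ^ (-(3/2):ℝ))]

private lemma alpha1_S_meas : MeasurableSet {s : Fin 4 → ℝ | ∀ i, 0 < s i} := by
  have : {s : Fin 4 → ℝ | ∀ i, 0 < s i} = Set.univ.pi (fun _ => Ioi (0:ℝ)) := by
    ext s; simp [Set.mem_pi]
  rw [this]
  exact MeasurableSet.univ_pi (fun i => measurableSet_Ioi)

private lemma alpha1_indicator_eq {x : ℝ} (hx : 0 < x) (s : Fin 4 → ℝ) :
    ({s : Fin 4 → ℝ | ∀ i, 0 < s i}).indicator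
      (fun s => (∏ i, s i) * (x^3 / alpha1D s x)) s
    = x^3 * ∏ i, alpha1Psi x i (s i) := by
  by_cases hsS : ∀ i, 0 < s i
  · rw [Set.indicator_of_mem (show s ∈ {s : Fin 4 → ℝ | ∀ i, 0 < s i} from hsS)]
    have hq : ∀ i : Fin 4, 0 < (1/4)*(s i)^2 + s i + x := fun i => by have := hsS i; nlinarith
    have hmem : ∀ i : Fin 4, s i ∈ Ioi (0:ℝ) := fun i => hsS i
    rw [Fin.prod_univ_four, Fin.prod_univ_four]
    have p0 : alpha1Psi x 0 (s 0) = s 0 * ((1/4)*(s 0)^2 + s 0 + x) ^ (-(7/2):ℝ) :=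
      Set.indicator_of_mem (hmem 0) (fun u => u * ((1/4)*u^2 + u + x) ^ (-(7/2):ℝ))
    have p1 : alpha1Psi x 1 (s 1) = s 1 * ((1/4)*(s 1)^2 + s 1 + x) ^ (-(3/2):ℝ) :=
      Set.indicator_of_mem (hmem 1) (fun u => u * ((1/4)*u^2 + u + x) ^ (-(3/2):ℝ))
    have p2 : alpha1Psi x 2 (s 2) = s 2 * ((1/4)*(s 2)^2 + s 2 + x) ^ (-(7/2):ℝ) :=
      Set.indicator_of_mem (hmem 2) (fun u => u * ((1/4)*u^2 + u + x) ^ (-(7/2):ℝ))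
    have p3 : alpha1Psi x 3 (s 3) = s 3 * ((1/4)*(s 3)^2 + s 3 + x) ^ (-(3/2):ℝ) :=
      Set.indicator_of_mem (hmem 3) (fun u => u * ((1/4)*u^2 + u + x) ^ (-(3/2):ℝ))
    rw [p0, p1, p2, p3]
    rw [Real.rpow_neg (hq 0).le, Real.rpow_neg (hq 1).le, Real.rpow_neg (hq 2).le,
      Real.rpow_neg (hq 3).le]
    unfold alpha1D
    have h0 := Real.rpow_pos_of_pos (hq 0) ((7:ℝ)/2)
    have h1 := Real.rpow_pos_of_pos (hq 1) ((3:ℝ)/2)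
    have h2 := Real.rpow_pos_of_pos (hq 2) ((7:ℝ)/2)
    have h3 := Real.rpow_pos_of_pos (hq 3) ((3:ℝ)/2)
    field_simp
  · rw [Set.indicator_of_notMem (show s ∉ {s : Fin 4 → ℝ | ∀ i, 0 < s i} from hsS)]
    push_neg at hsS
    obtain ⟨i, hi⟩ := hsS
    have hz : alpha1Psi x i (s i) = 0 := by
      have hnm : s i ∉ Ioi (0:ℝ) := by simpa using hi
      fin_cases i
      · exact Set.indicator_of_notMem hnm
          (fun u => u * ((1/4)*u^2 + u + x) ^ (-(7/2):ℝ))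
      · exact Set.indicator_of_notMem hnm
          (fun u => u * ((1/4)*u^2 + u + x) ^ (-(3/2):ℝ))
      · exact Set.indicator_of_notMem hnm
          (fun u => u * ((1/4)*u^2 + u + x) ^ (-(7/2):ℝ))
      · exact Set.indicator_of_notMem hnm
          (fun u => u * ((1/4)*u^2 + u + x) ^ (-(3/2):ℝ))
    rw [Finset.prod_eq_zero (Finset.mem_univ i) hz, mul_zero]

private lemma alpha1_slice {x : ℝ} (hx : 0 < x) (hx1 : x ≠ 1) :
    IntegrableOn (fun s : Fin 4 → ℝ => (∏ i, s i) * (x^3 / alpha1D s x))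
      {s : Fin 4 → ℝ | ∀ i, 0 < s i} ∧
    ∫ s in {s : Fin 4 → ℝ | ∀ i, 0 < s i}, (∏ i, s i) * (x^3 / alpha1D s x) = alpha1W x := by
  have h7 : Integrable ((Ioi (0:ℝ)).indicator
      (fun u => u * ((1/4)*u^2 + u + x) ^ (-(7/2):ℝ))) := by
    rw [integrable_indicator_iff measurableSet_Ioi]
    exact (alpha1_int7 hx hx1).1
  have h3 : Integrable ((Ioi (0:ℝ)).indicator
      (fun u => u * ((1/4)*u^2 + u + x) ^ (-(3/2):ℝ))) := by
    rw [integrable_indicator_iff measurableSet_Ioi]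
    exact (alpha1_int3 hx hx1).1
  have hint : ∀ i : Fin 4, Integrable (alpha1Psi x i) := by
    intro i
    fin_cases i
    exacts [h7, h3, h7, h3]
  have hprodint : Integrable (fun s : Fin 4 → ℝ => x^3 * ∏ i, alpha1Psi x i (s i)) :=
    (Integrable.fintype_prod (𝕜 := ℝ) hint).const_mul _
  have heq : ({s : Fin 4 → ℝ | ∀ i, 0 < s i}).indicator
      (fun s => (∏ i, s i) * (x^3 / alpha1D s x))
      = fun s => x^3 * ∏ i, alpha1Psi x i (s i) := funext (alpha1_indicator_eq hx)
  constructor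
  · rw [← integrable_indicator_iff alpha1_S_meas, heq]
    exact hprodint
  · rw [← integral_indicator alpha1_S_meas, heq, MeasureTheory.integral_const_mul,
      MeasureTheory.integral_fintype_prod_volume_eq_prod (𝕜 := ℝ) (alpha1Psi x),
      Fin.prod_univ_four]
    simp only [alpha1Psi, Matrix.cons_val_zero, Matrix.cons_val_one, Matrix.head_cons,
      Matrix.cons_val_two, Matrix.tail_cons, Matrix.cons_val_three]
    simp only [integral_indicator measurableSet_Ioi]
    rw [(alpha1_int7 hx hx1).2, (alpha1_int3 hx hx1).2]
    unfold alpha1W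
    ring


end AlphaOneAux

/-- After Schwinger parametrization, the five-fold integral form of `α₁`
equals `61/(645120 π²)`.  The exponents `7/2` apply to `s₁, s₃` and `3/2` to
`s₂, s₄` (indices `0,2` and `1,3` in `Fin 4`). -/
theorem alpha_one_schwinger_value :
    (1 / (2 * (4 * π) ^ 4)) *
        (Real.Gamma (7 / 2) ^ 2 * Real.Gamma (3 / 2) ^ 2 / Real.Gamma 4) *
        ∫ s in {s : Fin 4 → ℝ | ∀ i, 0 < s i},
          (∏ i, s i) *
            ∫ x in Set.Ioi (0 : ℝ),
              x ^ 3 /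
                (((1 / 4) * (s 0) ^ 2 + s 0 + x) ^ ((7 : ℝ) / 2) *
                  ((1 / 4) * (s 2) ^ 2 + s 2 + x) ^ ((7 : ℝ) / 2) *
                  ((1 / 4) * (s 1) ^ 2 + s 1 + x) ^ ((3 : ℝ) / 2) *
                  ((1 / 4) * (s 3) ^ 2 + s 3 + x) ^ ((3 : ℝ) / 2))
      = 61 / (645120 * π ^ 2) := by
  have hmain : (∫ s in {s : Fin 4 → ℝ | ∀ i, 0 < s i},
      (∏ i, s i) * ∫ x in Ioi (0:ℝ), x^3 / alpha1D s x) = 7808/23625 := by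
    set S := {s : Fin 4 → ℝ | ∀ i, 0 < s i} with hS
    have hmemS : ∀ᵐ s ∂(volume.restrict S), s ∈ S := ae_restrict_mem alpha1_S_meas
    -- measurability of the joint integrand
    have hfmeas : Measurable (fun p : (Fin 4 → ℝ) × ℝ => p.2^3 / alpha1D p.1 p.2) := by
      have hq : ∀ i : Fin 4, Measurable (fun p : (Fin 4 → ℝ) × ℝ =>
          (1/4)*(p.1 i)^2 + p.1 i + p.2) := fun i =>
        (((((measurable_pi_apply i).comp measurable_fst).pow_const 2).const_mul (1/4)).add
          ((measurable_pi_apply i).comp measurable_fst)).add measurable_snd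
      exact (measurable_snd.pow_const 3).div
        (((((hq 0).pow_const _).mul ((hq 2).pow_const _)).mul ((hq 1).pow_const _)).mul
          ((hq 3).pow_const _))
    have hprodmeas : Measurable (fun s : Fin 4 → ℝ => ∏ i, s i) :=
      Finset.measurable_prod _ (fun i _ => measurable_pi_apply i)
    have hPhimeas : Measurable (fun p : (Fin 4 → ℝ) × ℝ =>
        (∏ i, p.1 i) * (p.2^3 / alpha1D p.1 p.2)) :=
      (hprodmeas.comp measurable_fst).mul hfmeas
    -- nonnegativity of the outer integrand
    have hinner_nonneg : ∀ s : Fin 4 → ℝ, s ∈ S →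
        0 ≤ ∫ x in Ioi (0:ℝ), x^3 / alpha1D s x := by
      intro s hs
      apply setIntegral_nonneg measurableSet_Ioi
      intro x hx
      exact div_nonneg (pow_nonneg (le_of_lt hx) 3) (alpha1D_pos hs hx).le
    have hgnn : 0 ≤ᵐ[volume.restrict S]
        (fun s => (∏ i, s i) * ∫ x in Ioi (0:ℝ), x^3 / alpha1D s x) := by
      filter_upwards [hmemS] with s hs
      exact mul_nonneg (Finset.prod_nonneg (fun i _ => (hs i).le)) (hinner_nonneg s hs)
    have hgmeas : AEStronglyMeasurable
        (fun s : Fin 4 → ℝ => (∏ i, s i) * ∫ x in Ioi (0:ℝ), x^3 / alpha1D s x)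
        (volume.restrict S) := by
      apply (hprodmeas.stronglyMeasurable.mul
        (hfmeas.stronglyMeasurable.integral_prod_right')).aestronglyMeasurable.restrict
    rw [integral_eq_lintegral_of_nonneg_ae hgnn hgmeas]
    have hL : (∫⁻ s in S, ENNReal.ofReal
        ((∏ i, s i) * ∫ x in Ioi (0:ℝ), x^3 / alpha1D s x)) = ENNReal.ofReal (7808/23625) := by
      have step1 : (∫⁻ s in S, ENNReal.ofReal
          ((∏ i, s i) * ∫ x in Ioi (0:ℝ), x^3 / alpha1D s x))
          = ∫⁻ s in S, ∫⁻ x in Ioi (0:ℝ),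
              ENNReal.ofReal ((∏ i, s i) * (x^3 / alpha1D s x)) := by
        apply lintegral_congr_ae
        filter_upwards [hmemS] with s hs
        have hpnn : (0:ℝ) ≤ ∏ i, s i := Finset.prod_nonneg (fun i _ => (hs i).le)
        rw [ENNReal.ofReal_mul hpnn,
          MeasureTheory.ofReal_integral_eq_lintegral_ofReal (alpha1_inner_integrable hs)
            ((ae_restrict_iff' measurableSet_Ioi).2 (ae_of_all _ (fun x hx =>
              div_nonneg (pow_nonneg (le_of_lt hx) 3) (alpha1D_pos hs hx).le))),
          ← lintegral_const_mul' _ _ ENNReal.ofReal_ne_top]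
        apply lintegral_congr_ae
        apply ae_of_all
        intro x
        dsimp only
        rw [← ENNReal.ofReal_mul hpnn]
      have step2 : (∫⁻ s in S, ∫⁻ x in Ioi (0:ℝ),
            ENNReal.ofReal ((∏ i, s i) * (x^3 / alpha1D s x)))
          = ∫⁻ x in Ioi (0:ℝ), ∫⁻ s in S,
              ENNReal.ofReal ((∏ i, s i) * (x^3 / alpha1D s x)) := by
        apply lintegral_lintegral_swap
        exact (ENNReal.measurable_ofReal.comp hPhimeas).aemeasurable
      have step3 : (∫⁻ x in Ioi (0:ℝ), ∫⁻ s in S,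
            ENNReal.ofReal ((∏ i, s i) * (x^3 / alpha1D s x)))
          = ∫⁻ x in Ioi (0:ℝ), ENNReal.ofReal (alpha1W x) := by
        apply lintegral_congr_ae
        have hne1 : ∀ᵐ x : ℝ ∂(volume.restrict (Ioi 0)), x ≠ 1 := by
          apply ae_restrict_of_ae
          have : volume ({1}:Set ℝ) = 0 := Real.volume_singleton
          simpa [ae_iff] using this
        filter_upwards [ae_restrict_mem measurableSet_Ioi, hne1] with x hx hx1
        rw [← MeasureTheory.ofReal_integral_eq_lintegral_ofReal (alpha1_slice hx hx1).1 ?_,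
          (alpha1_slice hx hx1).2]
        filter_upwards [ae_restrict_mem alpha1_S_meas] with s hs
        exact mul_nonneg (Finset.prod_nonneg (fun i _ => (hs i).le))
          (div_nonneg (pow_nonneg (le_of_lt hx) 3) (alpha1D_pos hs hx).le)
      have step4 : (∫⁻ x in Ioi (0:ℝ), ENNReal.ofReal (alpha1W x))
          = ENNReal.ofReal (7808/23625) := by
        rw [← MeasureTheory.ofReal_integral_eq_lintegral_ofReal alpha1W_int.1 ?_,
          alpha1W_int.2]
        apply (ae_restrict_iff' measurableSet_Ioi).2
        apply ae_of_all
        intro x hx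
        have hx0 : (0:ℝ) < x := hx
        exact mul_nonneg (mul_nonneg (pow_nonneg hx0.le 3) (sq_nonneg _)) (sq_nonneg _)
      rw [step1, step2, step3, step4]
    rw [hL, ENNReal.toReal_ofReal (by norm_num)]
  have hmain' : (∫ s in {s : Fin 4 → ℝ | ∀ i, 0 < s i},
      (∏ i, s i) *
        ∫ x in Set.Ioi (0 : ℝ),
          x ^ 3 /
            (((1 / 4) * (s 0) ^ 2 + s 0 + x) ^ ((7 : ℝ) / 2) *
              ((1 / 4) * (s 2) ^ 2 + s 2 + x) ^ ((7 : ℝ) / 2) *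
              ((1 / 4) * (s 1) ^ 2 + s 1 + x) ^ ((3 : ℝ) / 2) *
              ((1 / 4) * (s 3) ^ 2 + s 3 + x) ^ ((3 : ℝ) / 2))) = 7808/23625 := hmain
  rw [hmain']
  have h12 : Real.Gamma (1/2) = √π := Real.Gamma_one_half_eq
  have h32 : Real.Gamma (3/2) = (1/2) * √π := by
    rw [show (3/2:ℝ) = 1/2 + 1 by norm_num, Real.Gamma_add_one (by norm_num), h12]
  have h52 : Real.Gamma (5/2) = (3/2) * ((1/2) * √π) := by
    rw [show (5/2:ℝ) = 3/2 + 1 by norm_num, Real.Gamma_add_one (by norm_num), h32]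
  have h72 : Real.Gamma (7/2) = (5/2) * ((3/2) * ((1/2) * √π)) := by
    rw [show (7/2:ℝ) = 5/2 + 1 by norm_num, Real.Gamma_add_one (by norm_num), h52]
  have h4 : Real.Gamma 4 = 6 := by
    rw [show (4:ℝ) = 3 + 1 by norm_num, Real.Gamma_add_one (by norm_num),
      show (3:ℝ) = 2 + 1 by norm_num, Real.Gamma_add_one (by norm_num),
      show (2:ℝ) = 1 + 1 by norm_num, Real.Gamma_add_one (by norm_num), Real.Gamma_one]
    norm_num
  rw [h72, h32, h4]
  have hsq : √π ^ 2 = π := Real.sq_sqrt pi_pos.le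
  have hπ : π ≠ 0 := pi_ne_zero
  field_simp
  ring_nf
  rw [show √π ^ 4 = (√π ^ 2) ^ 2 by ring, hsq]
end
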